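/- Suppose G is a group with finite symmetric generating set X whose set of geodesic words is k-locally excluding for some k > 0. If w is a geodesic word over X, x ∈ X, and v is the suffix of w of length k-1 (or all of w if l(w) < k-1), then wx is geodesic if and only if vx is geodesic. -/

import Mathlib

/-- The minimal length of a word over `X` representing `g` (the geodesic length `l_G`). -/
noncomputable def lG {G : Type*} [Group G] (X : Set G) (g : G) : ℕ :=
  sInf {n | ∃ w : List G, (∀ x ∈ w, x ∈ X) ∧ w.prod = g ∧ w.length = n}

/-- `w` is a geodesic word over `X`. -/
def Geodesic {G : Type*} [Group G] (X : Set G) (w : List G) : Prop :=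
  (∀ x ∈ w, x ∈ X) ∧ w.length = lG X w.prod

/-- `w` is a `k`-local geodesic over `X`: every subword (contiguous factor) of length
at most `k` is geodesic. -/
def LocalGeodesic {G : Type*} [Group G] (X : Set G) (k : ℕ) (w : List G) : Prop :=
  (∀ x ∈ w, x ∈ X) ∧ ∀ u : List G, u <:+: w → u.length ≤ k → Geodesic X u

/-- A language `L` of words over `X` is `k`-locally excluding: membership (among words
over `X`) is equivalent to avoiding a fixed finite set of forbidden subwords of length
at most `k`. -/
def LocallyExcluding {G : Type*} [Group G] (X : Set G) (k : ℕ) (L : Set (List G)) : Prop :=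
  ∃ F : Set (List G), F.Finite ∧ (∀ f ∈ F, f.length ≤ k) ∧
    ∀ w : List G, (∀ x ∈ w, x ∈ X) → (w ∈ L ↔ ∀ f ∈ F, ¬ f <:+: w)

/-- One step of rewriting with the set of rules `R` (replace a subword `p.1` by `p.2`). -/
def Rewrite {G : Type*} (R : Set (List G × List G)) (w w' : List G) : Prop :=
  ∃ p ∈ R, ∃ l r : List G, w = l ++ p.1 ++ r ∧ w' = l ++ p.2 ++ r

lemma suffix_of_suffix_length_le' {α : Type*} {f s t : List α}
    (hf : f <:+ t) (hs : s <:+ t) (h : f.length ≤ s.length) : f <:+ s := by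
  have hsl : s.length ≤ t.length := hs.length_le
  have hseq : s = t.drop (t.length - s.length) := List.suffix_iff_eq_drop.mp hs
  have hfeq : f = t.drop (t.length - f.length) := List.suffix_iff_eq_drop.mp hf
  rw [List.suffix_iff_eq_drop, hseq, List.drop_drop, List.length_drop]
  have : t.length - s.length + (t.length - (t.length - s.length) - f.length)
      = t.length - f.length := by omega
  rw [this, ← hfeq]

lemma infix_concat_cases {α : Type*} {f w : List α} {x : α}
    (h : f <:+: w ++ [x]) : f <:+: w ∨ f <:+ w ++ [x] := by
  obtain ⟨l, r, hlr⟩ := h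
  rcases r.eq_nil_or_concat with rfl | ⟨r', y, rfl⟩
  · right; exact ⟨l, by simpa using hlr⟩
  · left
    have h2 : (l ++ f ++ r') ++ [y] = w ++ [x] := by simpa using hlr
    have := List.append_inj' h2 rfl
    exact ⟨l, r', this.1⟩

/-- Lemma 2.1(ii): if the geodesics of `G` over `X` are `k`-locally excluding, `w` is
geodesic, `x ∈ X` and `v` is the suffix of `w` of length `k-1` (or all of `w`), then
`wx` is geodesic iff `vx` is geodesic. -/
theorem geodesic_append_iff_suffix {G : Type*} [Group G] (X : Set G)
    (hfin : X.Finite) (hsym : ∀ x ∈ X, x⁻¹ ∈ X) (hgen : Subgroup.closure X = ⊤)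
    (k : ℕ) (hk : 0 < k)
    (hle : LocallyExcluding X k {w : List G | Geodesic X w})
    (w : List G) (hw : Geodesic X w) (x : G) (hx : x ∈ X) :
    Geodesic X (w ++ [x]) ↔ Geodesic X (w.drop (w.length - (k - 1)) ++ [x]) := by
  obtain ⟨F, hFfin, hFlen, hFiff⟩ := hle
  set d := w.length - (k - 1) with hd
  set v := w.drop d with hv
  have hwx_over : ∀ y ∈ w ++ [x], y ∈ X := by
    intro y hy
    rcases List.mem_append.mp hy with h | h
    · exact hw.1 y h
    · simpa using List.mem_singleton.mp h ▸ hx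
  have hvx_over : ∀ y ∈ v ++ [x], y ∈ X := by
    intro y hy
    rcases List.mem_append.mp hy with h | h
    · exact hw.1 y (List.mem_of_mem_drop h)
    · simpa using List.mem_singleton.mp h ▸ hx
  have hvx_suffix : v ++ [x] <:+ w ++ [x] := by
    obtain ⟨p, hp⟩ := List.drop_suffix d w
    exact ⟨p, by rw [← List.append_assoc, hp]⟩
  constructor
  · intro hwx
    refine (hFiff (v ++ [x]) hvx_over).mpr ?_
    intro f hf hinf
    exact (hFiff (w ++ [x]) hwx_over).mp hwx f hf (hinf.trans hvx_suffix.isInfix)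
  · intro hvx
    refine (hFiff (w ++ [x]) hwx_over).mpr ?_
    intro f hf hinf
    rcases infix_concat_cases hinf with hfw | hfsuf
    · exact (hFiff w hw.1).mp hw f hf hfw
    · have hflen := hFlen f hf
      have hfs : f <:+ v ++ [x] := by
        by_cases hcase : k - 1 ≤ w.length
        · apply suffix_of_suffix_length_le' hfsuf hvx_suffix
          have : v.length = w.length - d := List.length_drop (i := d) (l := w)
          simp only [List.length_append, List.length_singleton]
          omega
        · have hd0 : d = 0 := by omega
          rw [hv, hd0, List.drop_zero]
          exact hfsuf
      exact (hFiff (v ++ [x]) hvx_over).mp hvx f hf hfs.isInfix
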